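/- Let A ∈ ℝ^{N×N} be block partitioned and 'border block diagonal': A_{ij} = 0 unless i = j, i = 1, or j = 1. Suppose there exist symmetric positive definite Q_1,…,Q_n and positive semidefinite Y_j, Z_j (j ≥ 2) such that Q_1 A_{11} + A_{11}ᵀ Q_1 + Σ_{j≥2} Y_j ≺ 0, Q_j A_{jj} + A_{jj}ᵀ Q_j + Z_j ⪯ 0 for j ≥ 2, and [[Y_j, -Q_1 A_{1j} - A_{j1}ᵀ Q_j], [-A_{1j}ᵀ Q_1 - Q_j A_{j1}, Z_j]] ≻ 0 for j ≥ 2. Then Q = diag(Q_1,…,Q_n) is positive definite and Q·A + Aᵀ·Q is negative definite. -/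

import Mathlib

open Matrix Finset

/-- The `(i, j)` block of an `α`-partitioned matrix. -/
def blk {n : ℕ} {k : Fin n → ℕ} {R : Type*}
    (A : Matrix ((i : Fin n) × Fin (k i)) ((i : Fin n) × Fin (k i)) R)
    (i j : Fin n) : Matrix (Fin (k i)) (Fin (k j)) R :=
  Matrix.of fun a b => A ⟨i, a⟩ ⟨j, b⟩

section helpers

variable {m : ℕ} {k : Fin m → ℕ}

/-- The `i`-th block of a partitioned vector. -/
def vblk (x : ((i : Fin m) × Fin (k i)) → ℝ) (i : Fin m) : Fin (k i) → ℝ :=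
  fun a => x ⟨i, a⟩

lemma vblk_ne_zero {x : ((i : Fin m) × Fin (k i)) → ℝ} (hx : x ≠ 0) :
    ∃ i, vblk x i ≠ 0 := by
  by_contra h
  push_neg at h
  apply hx
  funext p
  have := congrFun (h p.1) p.2
  simpa [vblk] using this

lemma quad_eq (M : Matrix ((i : Fin m) × Fin (k i)) ((i : Fin m) × Fin (k i)) ℝ)
    (x : ((i : Fin m) × Fin (k i)) → ℝ) :
    x ⬝ᵥ M *ᵥ x = ∑ i, ∑ j, vblk x i ⬝ᵥ blk M i j *ᵥ vblk x j := by
  simp only [dotProduct, mulVec, blk, vblk, Matrix.of_apply]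
  rw [← Finset.univ_sigma_univ, Finset.sum_sigma]
  refine Finset.sum_congr rfl fun i _ => ?_
  calc ∑ a, x ⟨i, a⟩ * ∑ q, M ⟨i, a⟩ q * x q
      = ∑ a, ∑ j, ∑ b, x ⟨i, a⟩ * (M ⟨i, a⟩ ⟨j, b⟩ * x ⟨j, b⟩) := by
        refine Finset.sum_congr rfl fun a _ => ?_
        rw [← Finset.univ_sigma_univ, Finset.sum_sigma, Finset.mul_sum]
        exact Finset.sum_congr rfl fun j _ => Finset.mul_sum _ _ _
    _ = ∑ j, ∑ a, ∑ b, x ⟨i, a⟩ * (M ⟨i, a⟩ ⟨j, b⟩ * x ⟨j, b⟩) := Finset.sum_comm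
    _ = _ := by
        refine Finset.sum_congr rfl fun j _ => Finset.sum_congr rfl fun a _ => ?_
        rw [Finset.mul_sum]

lemma blk_bd_mul (Q : ∀ i, Matrix (Fin (k i)) (Fin (k i)) ℝ)
    (A : Matrix ((i : Fin m) × Fin (k i)) ((i : Fin m) × Fin (k i)) ℝ) (i j : Fin m) :
    blk (Matrix.blockDiagonal' Q * A) i j = Q i * blk A i j := by
  ext a b
  simp only [blk, Matrix.of_apply, Matrix.mul_apply]
  rw [← Finset.univ_sigma_univ, Finset.sum_sigma]
  rw [Finset.sum_eq_single i]
  · exact Finset.sum_congr rfl fun c _ => by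
      rw [Matrix.blockDiagonal'_apply_eq]
  · intro l _ hl
    refine Finset.sum_eq_zero fun c _ => ?_
    rw [Matrix.blockDiagonal'_apply_ne _ _ _ (Ne.symm hl), zero_mul]
  · intro h; exact absurd (Finset.mem_univ i) h

lemma blk_mul_bd (Q : ∀ i, Matrix (Fin (k i)) (Fin (k i)) ℝ)
    (A : Matrix ((i : Fin m) × Fin (k i)) ((i : Fin m) × Fin (k i)) ℝ) (i j : Fin m) :
    blk (Aᵀ * Matrix.blockDiagonal' Q) i j = (blk A j i)ᵀ * Q j := by
  ext a b
  simp only [blk, Matrix.of_apply, Matrix.mul_apply, Matrix.transpose_apply]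
  rw [← Finset.univ_sigma_univ, Finset.sum_sigma]
  rw [Finset.sum_eq_single j]
  · exact Finset.sum_congr rfl fun c _ => by
      rw [Matrix.blockDiagonal'_apply_eq]
  · intro l _ hl
    refine Finset.sum_eq_zero fun c _ => ?_
    rw [Matrix.blockDiagonal'_apply_ne _ _ _ hl, mul_zero]
  · intro h; exact absurd (Finset.mem_univ j) h

lemma blk_bd_eq (Q : ∀ i, Matrix (Fin (k i)) (Fin (k i)) ℝ) (i : Fin m) :
    blk (Matrix.blockDiagonal' Q) i i = Q i := by
  ext a b
  simp only [blk, Matrix.of_apply]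
  rw [Matrix.blockDiagonal'_apply_eq]

lemma blk_bd_ne (Q : ∀ i, Matrix (Fin (k i)) (Fin (k i)) ℝ) {i j : Fin m} (h : i ≠ j) :
    blk (Matrix.blockDiagonal' Q) i j = 0 := by
  ext a b
  simp only [blk, Matrix.of_apply]
  rw [Matrix.blockDiagonal'_apply_ne _ _ _ h]
  rfl

lemma dot_sum_mulVec {N : ℕ} {ι : Type*} (s : Finset ι)
    (Y : ι → Matrix (Fin N) (Fin N) ℝ) (u : Fin N → ℝ) :
    u ⬝ᵥ (∑ j ∈ s, Y j) *ᵥ u = ∑ j ∈ s, u ⬝ᵥ Y j *ᵥ u := by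
  induction s using Finset.cons_induction with
  | empty => simp
  | cons a s ha ih => simp [Finset.sum_cons, Matrix.add_mulVec, dotProduct_add, ih]

end helpers

theorem border_block_diagonal_stability {n : ℕ} (k : Fin (n + 1) → ℕ)
    (A : Matrix ((i : Fin (n + 1)) × Fin (k i)) ((i : Fin (n + 1)) × Fin (k i)) ℝ)
    (hborder : ∀ i j : Fin (n + 1), i ≠ j → i ≠ 0 → j ≠ 0 → blk A i j = 0)
    (Q : ∀ i, Matrix (Fin (k i)) (Fin (k i)) ℝ)
    (Y : ∀ j : Fin (n + 1), Matrix (Fin (k 0)) (Fin (k 0)) ℝ)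
    (Z : ∀ j : Fin (n + 1), Matrix (Fin (k j)) (Fin (k j)) ℝ)
    (hQ : ∀ i, (Q i).PosDef)
    (hQsymm : ∀ i, (Q i).IsSymm)
    (hY : ∀ j, j ≠ 0 → (Y j).PosSemidef)
    (hZ : ∀ j, j ≠ 0 → (Z j).PosSemidef)
    (h1 : (-(Q 0 * blk A 0 0 + (blk A 0 0)ᵀ * Q 0
        + ∑ j ∈ Finset.univ.erase 0, Y j)).PosDef)
    (h2 : ∀ j, j ≠ 0 → (-(Q j * blk A j j + (blk A j j)ᵀ * Q j + Z j)).PosSemidef)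
    (h3 : ∀ j, j ≠ 0 →
      (Matrix.fromBlocks (Y j) (-(Q 0 * blk A 0 j + (blk A j 0)ᵀ * Q j))
        (-((blk A 0 j)ᵀ * Q 0 + Q j * blk A j 0)) (Z j)).PosDef) :
    (Matrix.blockDiagonal' Q).PosDef ∧
      (-(Matrix.blockDiagonal' Q * A + Aᵀ * Matrix.blockDiagonal' Q)).PosDef := by
  have hBDsymm : (Matrix.blockDiagonal' Q)ᵀ = Matrix.blockDiagonal' Q := by
    have hQ' : (fun i => (Q i)ᵀ) = Q := funext fun i => hQsymm i
    rw [Matrix.blockDiagonal'_transpose, hQ']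
  constructor
  · rw [Matrix.posDef_iff_dotProduct_mulVec]
    constructor
    · show (Matrix.blockDiagonal' Q)ᴴ = _
      ext p q
      rw [Matrix.conjTranspose_apply, star_trivial]
      have := congrFun (congrFun hBDsymm p) q
      simpa [Matrix.transpose_apply] using this
    · intro x hx
      rw [star_trivial, quad_eq]
      have hcollapse : ∀ i : Fin (n + 1),
          ∑ j, vblk x i ⬝ᵥ blk (Matrix.blockDiagonal' Q) i j *ᵥ vblk x j
            = vblk x i ⬝ᵥ Q i *ᵥ vblk x i := by
        intro i
        rw [Finset.sum_eq_single i]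
        · rw [blk_bd_eq]
        · intro j _ hj
          rw [blk_bd_ne Q (Ne.symm hj)]
          simp
        · intro h; exact absurd (Finset.mem_univ i) h
      rw [Finset.sum_congr rfl fun i _ => hcollapse i]
      obtain ⟨i0, hi0⟩ := vblk_ne_zero hx
      refine Finset.sum_pos' (fun i _ => ?_) ⟨i0, Finset.mem_univ i0, ?_⟩
      · have := (hQ i).posSemidef.dotProduct_mulVec_nonneg (vblk x i)
        simpa using this
      · have := (hQ i0).dotProduct_mulVec_pos hi0
        simpa using this
  · have hblkM : ∀ i j, blk (-(Matrix.blockDiagonal' Q * A + Aᵀ * Matrix.blockDiagonal' Q)) i j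
        = -(Q i * blk A i j + (blk A j i)ᵀ * Q j) := by
      intro i j
      have e1 := blk_bd_mul Q A i j
      have e2 := blk_mul_bd Q A i j
      ext a b
      simp only [blk, Matrix.of_apply, Matrix.neg_apply, Matrix.add_apply] at e1 e2 ⊢
      rw [← congrFun (congrFun e1 a) b, ← congrFun (congrFun e2 a) b]
      simp [blk]
    rw [Matrix.posDef_iff_dotProduct_mulVec]
    constructor
    · show (-(Matrix.blockDiagonal' Q * A + Aᵀ * Matrix.blockDiagonal' Q))ᴴ = _
      have ht : (-(Matrix.blockDiagonal' Q * A + Aᵀ * Matrix.blockDiagonal' Q))ᵀ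
          = -(Matrix.blockDiagonal' Q * A + Aᵀ * Matrix.blockDiagonal' Q) := by
        rw [Matrix.transpose_neg, Matrix.transpose_add, Matrix.transpose_mul,
          Matrix.transpose_mul, Matrix.transpose_transpose, hBDsymm]
        exact congrArg Neg.neg (add_comm _ _)
      ext p q
      rw [Matrix.conjTranspose_apply, star_trivial]
      have := congrFun (congrFun ht p) q
      simpa [Matrix.transpose_apply] using this
    · intro x hx
      rw [star_trivial, quad_eq]
      set f : Fin (n + 1) → Fin (n + 1) → ℝ := fun i j =>
        vblk x i ⬝ᵥ blk (-(Matrix.blockDiagonal' Q * A + Aᵀ * Matrix.blockDiagonal' Q)) i j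
          *ᵥ vblk x j with hf
      have hf0 : ∀ i j : Fin (n + 1), i ≠ j → i ≠ 0 → j ≠ 0 → f i j = 0 := by
        intro i j hij hi hj
        rw [hf]
        simp only [hblkM, hborder i j hij hi hj, hborder j i (Ne.symm hij) hj hi]
        simp
      have hsum : ∑ i, ∑ j, f i j
          = f 0 0 + ∑ j ∈ Finset.univ.erase 0, (f 0 j + f j 0 + f j j) := by
        rw [← Finset.add_sum_erase _ (fun i => ∑ j, f i j) (Finset.mem_univ 0)]
        rw [← Finset.add_sum_erase _ (f 0) (Finset.mem_univ 0)]
        have h4 : ∀ i ∈ Finset.univ.erase (0 : Fin (n + 1)),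
            ∑ j, f i j = f i 0 + f i i := by
          intro i hi
          have hi0 : i ≠ 0 := (Finset.mem_erase.mp hi).1
          rw [← Finset.add_sum_erase _ (f i) (Finset.mem_univ 0)]
          congr 1
          rw [Finset.sum_eq_single_of_mem i (Finset.mem_erase.mpr ⟨hi0, Finset.mem_univ i⟩)]
          intro j hj hji
          exact hf0 i j (Ne.symm hji) hi0 (Finset.mem_erase.mp hj).1
        rw [Finset.sum_congr rfl h4, Finset.sum_add_distrib, Finset.sum_add_distrib,
          Finset.sum_add_distrib]
        ring
      rw [hsum]
      set u := vblk x 0 with hu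
      have hf00 : f 0 0 = u ⬝ᵥ (-(Q 0 * blk A 0 0 + (blk A 0 0)ᵀ * Q 0
          + ∑ j ∈ Finset.univ.erase 0, Y j)) *ᵥ u
          + ∑ j ∈ Finset.univ.erase 0, u ⬝ᵥ Y j *ᵥ u := by
        rw [hf]
        simp only [hblkM]
        rw [← hu, ← dot_sum_mulVec]
        simp only [neg_add, Matrix.add_mulVec, Matrix.neg_mulVec, dotProduct_add,
          dotProduct_neg]
        ring
      have hkey : ∀ j ∈ Finset.univ.erase (0 : Fin (n + 1)),
          f 0 j + f j 0 + f j j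
            = (Sum.elim u (vblk x j)) ⬝ᵥ
                (Matrix.fromBlocks (Y j) (-(Q 0 * blk A 0 j + (blk A j 0)ᵀ * Q j))
                  (-((blk A 0 j)ᵀ * Q 0 + Q j * blk A j 0)) (Z j)) *ᵥ
                (Sum.elim u (vblk x j))
              - u ⬝ᵥ Y j *ᵥ u
              + vblk x j ⬝ᵥ (-(Q j * blk A j j + (blk A j j)ᵀ * Q j + Z j)) *ᵥ vblk x j := by
        intro j hj
        rw [hf]
        simp only [hblkM, ← hu, Matrix.fromBlocks_mulVec, sumElim_dotProduct_sumElim,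
          Sum.elim_comp_inl, Sum.elim_comp_inr]
        simp only [neg_add, Matrix.add_mulVec, Matrix.neg_mulVec, dotProduct_add,
          dotProduct_neg, Sum.elim_comp_inl, Sum.elim_comp_inr]
        ring
      rw [hf00, Finset.sum_congr rfl hkey]
      have hterm_nonneg : ∀ j ∈ Finset.univ.erase (0 : Fin (n + 1)),
          0 ≤ (Sum.elim u (vblk x j)) ⬝ᵥ
                (Matrix.fromBlocks (Y j) (-(Q 0 * blk A 0 j + (blk A j 0)ᵀ * Q j))
                  (-((blk A 0 j)ᵀ * Q 0 + Q j * blk A j 0)) (Z j)) *ᵥ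
                (Sum.elim u (vblk x j))
              - u ⬝ᵥ Y j *ᵥ u
              + vblk x j ⬝ᵥ (-(Q j * blk A j j + (blk A j j)ᵀ * Q j + Z j)) *ᵥ vblk x j →
          True := fun _ _ _ => trivial
      clear hterm_nonneg
      -- rearrange: f00 + Σ(...) = u⬝C u + Σ (B-quadform + D-quadform)
      rw [Finset.sum_add_distrib, Finset.sum_sub_distrib]
      have hC : (0 : ℝ) ≤ u ⬝ᵥ (-(Q 0 * blk A 0 0 + (blk A 0 0)ᵀ * Q 0
          + ∑ j ∈ Finset.univ.erase 0, Y j)) *ᵥ u := by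
        have := h1.posSemidef.dotProduct_mulVec_nonneg u
        simpa using this
      have hB : ∀ j ∈ Finset.univ.erase (0 : Fin (n + 1)),
          (0 : ℝ) ≤ (Sum.elim u (vblk x j)) ⬝ᵥ
              (Matrix.fromBlocks (Y j) (-(Q 0 * blk A 0 j + (blk A j 0)ᵀ * Q j))
                (-((blk A 0 j)ᵀ * Q 0 + Q j * blk A j 0)) (Z j)) *ᵥ
              (Sum.elim u (vblk x j)) := by
        intro j hj
        have := (h3 j (Finset.mem_erase.mp hj).1).posSemidef.dotProduct_mulVec_nonneg (Sum.elim u (vblk x j))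
        simpa using this
      have hD : ∀ j ∈ Finset.univ.erase (0 : Fin (n + 1)),
          (0 : ℝ) ≤ vblk x j ⬝ᵥ (-(Q j * blk A j j + (blk A j j)ᵀ * Q j + Z j)) *ᵥ vblk x j := by
        intro j hj
        have := (h2 j (Finset.mem_erase.mp hj).1).dotProduct_mulVec_nonneg (vblk x j)
        simpa using this
      by_cases hu0 : u = 0
      · obtain ⟨i0, hi0⟩ := vblk_ne_zero hx
        have hi0ne : i0 ≠ 0 := by
          rintro rfl
          exact hi0 hu0
        have hi0mem : i0 ∈ Finset.univ.erase (0 : Fin (n + 1)) :=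
          Finset.mem_erase.mpr ⟨hi0ne, Finset.mem_univ i0⟩
        have hBpos : (0 : ℝ) < (Sum.elim u (vblk x i0)) ⬝ᵥ
            (Matrix.fromBlocks (Y i0) (-(Q 0 * blk A 0 i0 + (blk A i0 0)ᵀ * Q i0))
              (-((blk A 0 i0)ᵀ * Q 0 + Q i0 * blk A i0 0)) (Z i0)) *ᵥ
            (Sum.elim u (vblk x i0)) := by
          have hw : Sum.elim u (vblk x i0) ≠ 0 := by
            intro hw
            apply hi0
            funext b
            exact congrFun hw (Sum.inr b)
          have := (h3 i0 hi0ne).dotProduct_mulVec_pos hw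
          simpa using this
        have hsumY : ∑ j ∈ Finset.univ.erase (0 : Fin (n + 1)), u ⬝ᵥ Y j *ᵥ u = 0 := by
          refine Finset.sum_eq_zero fun j hj => ?_
          rw [hu0]
          simp
        rw [hsumY]
        have hBsum : (0 : ℝ) < ∑ j ∈ Finset.univ.erase (0 : Fin (n + 1)),
            (Sum.elim u (vblk x j)) ⬝ᵥ
              (Matrix.fromBlocks (Y j) (-(Q 0 * blk A 0 j + (blk A j 0)ᵀ * Q j))
                (-((blk A 0 j)ᵀ * Q 0 + Q j * blk A j 0)) (Z j)) *ᵥ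
              (Sum.elim u (vblk x j)) :=
          Finset.sum_pos' hB ⟨i0, hi0mem, hBpos⟩
        have hDsum : (0 : ℝ) ≤ ∑ j ∈ Finset.univ.erase (0 : Fin (n + 1)),
            vblk x j ⬝ᵥ (-(Q j * blk A j j + (blk A j j)ᵀ * Q j + Z j)) *ᵥ vblk x j :=
          Finset.sum_nonneg hD
        linarith
      · have hCpos : (0 : ℝ) < u ⬝ᵥ (-(Q 0 * blk A 0 0 + (blk A 0 0)ᵀ * Q 0
            + ∑ j ∈ Finset.univ.erase 0, Y j)) *ᵥ u := by
          have := h1.dotProduct_mulVec_pos hu0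
          simpa using this
        have hBsum : (0 : ℝ) ≤ ∑ j ∈ Finset.univ.erase (0 : Fin (n + 1)),
            (Sum.elim u (vblk x j)) ⬝ᵥ
              (Matrix.fromBlocks (Y j) (-(Q 0 * blk A 0 j + (blk A j 0)ᵀ * Q j))
                (-((blk A 0 j)ᵀ * Q 0 + Q j * blk A j 0)) (Z j)) *ᵥ
              (Sum.elim u (vblk x j)) :=
          Finset.sum_nonneg hB
        have hDsum : (0 : ℝ) ≤ ∑ j ∈ Finset.univ.erase (0 : Fin (n + 1)),
            vblk x j ⬝ᵥ (-(Q j * blk A j j + (blk A j j)ᵀ * Q j + Z j)) *ᵥ vblk x j :=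
          Finset.sum_nonneg hD
        have hYsum : ∑ j ∈ Finset.univ.erase (0 : Fin (n + 1)), u ⬝ᵥ Y j *ᵥ u
            = u ⬝ᵥ (∑ j ∈ Finset.univ.erase (0 : Fin (n + 1)), Y j) *ᵥ u :=
          (dot_sum_mulVec _ _ _).symm
        linarith
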